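/- If n is odd, the number of inequivalent exact factorizations of the dihedral group D_{2n} equals 2^{ω(n)} - 1. -/

import Mathlib

/-- An exact factorization of a finite group `G` is a pair of nontrivial subgroups `(H, K)`
with `HK = G` and `H ∩ K = 1`. -/
def IsExactFactorization {G : Type*} [Group G] (p : Subgroup G × Subgroup G) : Prop :=
  p.1 ≠ ⊥ ∧ p.2 ≠ ⊥ ∧ p.1 ⊓ p.2 = ⊥ ∧ ∀ g : G, ∃ h ∈ p.1, ∃ k ∈ p.2, g = h * k

/-- Two exact factorizations are equivalent if their factor pairs are isomorphic as
unordered pairs of groups. -/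
def FactEquiv {G : Type*} [Group G]
    (p q : {p : Subgroup G × Subgroup G // IsExactFactorization p}) : Prop :=
  (Nonempty (p.1.1 ≃* q.1.1) ∧ Nonempty (p.1.2 ≃* q.1.2)) ∨
  (Nonempty (p.1.1 ≃* q.1.2) ∧ Nonempty (p.1.2 ≃* q.1.1))

/-- The number of exact factorizations of a group, counted up to equivalence. -/
noncomputable def f₂ (G : Type*) [Group G] : ℕ :=
  Nat.card (Quot (FactEquiv (G := G)))

open Finset
open DihedralGroup


lemma prod_primeFactors_pow_factorization (n : ℕ) (hn : 0 < n) :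
    ∏ p ∈ n.primeFactors, p ^ n.factorization p = n := by
  conv_rhs => rw [← Nat.factorization_prod_pow_eq_self hn.ne']
  rfl

lemma unitary_divisors_card (n : ℕ) (hn : 0 < n) :
    ((n.divisors.filter fun d => d.Coprime (n / d))).card = 2 ^ n.primeFactors.card := by
  rw [← Finset.card_powerset]
  apply Finset.card_bij' (fun d _ => d.primeFactors)
    (fun T _ => ∏ p ∈ T, p ^ n.factorization p)
  · -- maps into powerset
    intro d hd
    simp only [Finset.mem_filter, Nat.mem_divisors] at hd
    simpa using Nat.primeFactors_mono hd.1.1 hn.ne'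
  · -- maps into filter
    intro T hT
    simp only [Finset.mem_powerset] at hT
    have hprime : ∀ p ∈ T, Nat.Prime p := fun p hp => Nat.prime_of_mem_primeFactors (hT hp)
    have hprod : (∏ p ∈ T, p ^ n.factorization p) *
        (∏ p ∈ n.primeFactors \ T, p ^ n.factorization p) = n := by
      rw [← Finset.prod_union (Finset.disjoint_sdiff), Finset.union_sdiff_of_subset hT]
      exact prod_primeFactors_pow_factorization n hn
    have hdvd : (∏ p ∈ T, p ^ n.factorization p) ∣ n := ⟨_, hprod.symm⟩
    have hpos : 0 < ∏ p ∈ T, p ^ n.factorization p := by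
      apply Finset.prod_pos
      intro p hp
      exact pow_pos (hprime p hp).pos _
    have hdiv : n / (∏ p ∈ T, p ^ n.factorization p) = ∏ p ∈ n.primeFactors \ T, p ^ n.factorization p :=
      Nat.div_eq_of_eq_mul_left hpos (by rw [mul_comm]; exact hprod.symm)
    rw [Finset.mem_filter, Nat.mem_divisors, hdiv]
    refine ⟨⟨hdvd, hn.ne'⟩, ?_⟩
    rw [Nat.coprime_prod_left_iff]
    intro p hp
    rw [Nat.coprime_prod_right_iff]
    intro q hq
    simp only [Finset.mem_sdiff] at hq
    have hpq : p ≠ q := fun h => hq.2 (h ▸ hp)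
    exact Nat.Coprime.pow _ _ ((Nat.coprime_primes (hprime p hp)
      (Nat.prime_of_mem_primeFactors hq.1)).mpr hpq)
  · -- left inverse
    intro d hd
    simp only [Finset.mem_filter, Nat.mem_divisors] at hd
    obtain ⟨⟨hdn, _⟩, hcop⟩ := hd
    have hd0 : d ≠ 0 := fun h => hn.ne' (Nat.eq_zero_of_zero_dvd (h ▸ hdn))
    have key : ∀ p ∈ d.primeFactors, p ^ n.factorization p = p ^ d.factorization p := by
      intro p hp
      congr 1
      have hpd : p ∣ d := Nat.dvd_of_mem_primeFactors hp
      have hq0 : n / d ≠ 0 := by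
        intro h
        rw [Nat.div_eq_zero_iff, or_iff_right hd0] at h
        exact absurd (Nat.le_of_dvd hn hdn) (not_le.mpr h)
      have hnd : n = d * (n / d) := (Nat.div_mul_cancel hdn).symm ▸ (Nat.mul_div_cancel' hdn).symm
      rw [hnd, Nat.factorization_mul hd0 hq0]
      have : (n / d).factorization p = 0 := by
        apply Nat.factorization_eq_zero_of_not_dvd
        intro hpnd
        have hc := Nat.Coprime.coprime_dvd_left hpd hcop
        exact (Nat.prime_of_mem_primeFactors hp).one_lt.ne' (hc.eq_one_of_dvd hpnd)
      simp [this]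
    rw [Finset.prod_congr rfl key]
    exact prod_primeFactors_pow_factorization d (Nat.pos_of_ne_zero hd0)
  · -- right inverse
    intro T hT
    simp only [Finset.mem_powerset] at hT
    ext q
    simp only [Nat.mem_primeFactors]
    have hprime : ∀ p ∈ T, Nat.Prime p := fun p hp => Nat.prime_of_mem_primeFactors (hT hp)
    have hpos : (∏ p ∈ T, p ^ n.factorization p) ≠ 0 :=
      (Finset.prod_pos fun p hp => pow_pos (hprime p hp).pos _).ne'
    constructor
    · rintro ⟨hq, hdvd, -⟩
      obtain ⟨p, hp, hqp⟩ := (Prime.dvd_finset_prod_iff hq.prime _).mp hdvd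
      have := hq.dvd_of_dvd_pow hqp
      rwa [(Nat.prime_dvd_prime_iff_eq hq (hprime p hp)).mp this]
    · intro hq
      have hq' := hprime q hq
      refine ⟨hq', ?_, hpos⟩
      have h1 : q ∣ q ^ n.factorization q := dvd_pow_self q (Nat.Prime.factorization_pos_of_dvd hq' hn.ne'
        (Nat.dvd_of_mem_primeFactors (hT hq))).ne'
      exact h1.trans (Finset.dvd_prod_of_mem (fun p => p ^ n.factorization p) hq)

lemma count_lemma (n : ℕ) (hn : 0 < n) :
    ((n.divisors.filter fun d => d ≠ 1 ∧ d.Coprime (n / d))).card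
      = 2 ^ n.primeFactors.card - 1 := by
  have h1 : (n.divisors.filter fun d => d ≠ 1 ∧ d.Coprime (n / d))
      = (n.divisors.filter fun d => d.Coprime (n / d)).erase 1 := by
    ext d
    simp only [Finset.mem_filter, Finset.mem_erase]
    tauto
  rw [h1, Finset.card_erase_of_mem, unitary_divisors_card n hn]
  rw [Finset.mem_filter]
  exact ⟨Nat.one_mem_divisors.mpr hn.ne', by simp [Nat.coprime_one_left]⟩


namespace DF

/-- the additive subgroup of `ZMod n` killed by `m`. -/
def A (n m : ℕ) : AddSubgroup (ZMod n) where
  carrier := {x | (m : ZMod n) * x = 0}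
  add_mem' := by
    intro a b ha hb
    simp only [Set.mem_setOf_eq] at *
    rw [mul_add, ha, hb, add_zero]
  zero_mem' := by simp
  neg_mem' := by
    intro a ha
    simp only [Set.mem_setOf_eq] at *
    rw [mul_neg, ha, neg_zero]

lemma mem_A {n m : ℕ} {x : ZMod n} : x ∈ A n m ↔ (m : ZMod n) * x = 0 := Iff.rfl

lemma A_eq_zmultiples (n m : ℕ) [NeZero n] (h : m ∣ n) :
    A n m = AddSubgroup.zmultiples ((n / m : ℕ) : ZMod n) := by
  have hn0 : n ≠ 0 := NeZero.ne n
  have hm0 : 0 < m := Nat.pos_of_ne_zero (fun hm => hn0 (Nat.eq_zero_of_zero_dvd (hm ▸ h)))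
  ext x
  constructor
  · intro hx
    rw [mem_A] at hx
    have hx' : ((m * x.val : ℕ) : ZMod n) = 0 := by
      push_cast
      rw [ZMod.natCast_zmod_val]
      exact hx
    rw [ZMod.natCast_eq_zero_iff] at hx'
    have hnm : n = m * (n / m) := (Nat.mul_div_cancel' h).symm
    have : (n / m) ∣ x.val := (mul_dvd_mul_iff_left hm0.ne').mp (hnm ▸ hx')
    obtain ⟨k, hk⟩ := this
    refine ⟨(k : ℤ), ?_⟩
    show (k : ℤ) • ((n / m : ℕ) : ZMod n) = x
    rw [zsmul_eq_mul]
    push_cast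
    rw [← Nat.cast_mul, mul_comm, ← hk, ZMod.natCast_zmod_val]
  · rintro ⟨k, rfl⟩
    rw [mem_A]
    show (m : ZMod n) * (k • ((n / m : ℕ) : ZMod n)) = 0
    have h0 : (m : ZMod n) * ((n / m : ℕ) : ZMod n) = 0 := by
      rw [← Nat.cast_mul, Nat.mul_div_cancel' h, ZMod.natCast_self]
    rw [zsmul_eq_mul, ← mul_assoc, mul_comm (m : ZMod n), mul_assoc, h0, mul_zero]

lemma card_A (n m : ℕ) [NeZero n] (h : m ∣ n) : Nat.card (A n m) = m := by
  rw [A_eq_zmultiples n m h, Nat.card_zmultiples,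
    ZMod.addOrderOf_coe _ (NeZero.ne n), Nat.gcd_eq_right (Nat.div_dvd_of_dvd h),
    Nat.div_div_self h (NeZero.ne n)]

lemma A_mono (n : ℕ) {g d : ℕ} (h : g ∣ d) : A n g ≤ A n d := by
  intro x hx
  rw [mem_A] at *
  obtain ⟨c, rfl⟩ := h
  push_cast
  rw [mul_comm (g : ZMod n), mul_assoc, hx, mul_zero]

lemma inv_r {n : ℕ} (x : ZMod n) : (r x)⁻¹ = r (-x) := by
  apply inv_eq_of_mul_eq_one_right
  rw [r_mul_r, add_neg_cancel, one_def]

lemma inv_sr {n : ℕ} (x : ZMod n) : (sr x)⁻¹ = sr x :=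
  inv_eq_of_mul_eq_one_right (sr_mul_self x)

lemma r_pow {n : ℕ} (x : ZMod n) (k : ℕ) : (r x) ^ k = r ((k : ZMod n) * x) := by
  induction k with
  | zero => rw [pow_zero, Nat.cast_zero, zero_mul, one_def]
  | succ k ih =>
      rw [pow_succ, ih, r_mul_r]
      push_cast
      ring_nf

/-- the "cyclic" subgroup of rotations of order `d`. -/
def Hsub (n d : ℕ) : Subgroup (DihedralGroup n) where
  carrier := {g | ∃ x ∈ A n d, g = r x}
  mul_mem' := by
    rintro _ _ ⟨x, hx, rfl⟩ ⟨y, hy, rfl⟩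
    exact ⟨x + y, add_mem hx hy, (r_mul_r x y).symm⟩
  one_mem' := ⟨0, zero_mem _, one_def⟩
  inv_mem' := by
    rintro _ ⟨x, hx, rfl⟩
    exact ⟨-x, neg_mem hx, inv_r x⟩

/-- the "dihedral" subgroup with rotation part of order `m` and reflections through `a + A n m`. -/
def Ksub (n m : ℕ) (a : ZMod n) : Subgroup (DihedralGroup n) where
  carrier := {g | (∃ x ∈ A n m, g = r x) ∨ (∃ x ∈ A n m, g = sr (a + x))}
  mul_mem' := by
    rintro _ _ (⟨x, hx, rfl⟩ | ⟨x, hx, rfl⟩) (⟨y, hy, rfl⟩ | ⟨y, hy, rfl⟩)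
    · exact Or.inl ⟨x + y, add_mem hx hy, (r_mul_r x y).symm⟩
    · exact Or.inr ⟨y - x, sub_mem hy hx, by rw [r_mul_sr]; ring_nf⟩
    · exact Or.inr ⟨x + y, add_mem hx hy, by rw [sr_mul_r]; ring_nf⟩
    · exact Or.inl ⟨y - x, sub_mem hy hx, by rw [sr_mul_sr]; ring_nf⟩
  one_mem' := Or.inl ⟨0, zero_mem _, one_def⟩
  inv_mem' := by
    rintro _ (⟨x, hx, rfl⟩ | ⟨x, hx, rfl⟩)
    · exact Or.inl ⟨-x, neg_mem hx, inv_r x⟩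
    · exact Or.inr ⟨x, hx, inv_sr _⟩

lemma card_Hsub (n d : ℕ) [NeZero n] (h : d ∣ n) : Nat.card (Hsub n d) = d := by
  have : Nat.card (Hsub n d) = Nat.card (A n d) := by
    apply Nat.card_congr
    symm
    apply Equiv.ofBijective (fun x => (⟨r x.1, ⟨x.1, x.2, rfl⟩⟩ : Hsub n d))
    constructor
    · intro x y hxy
      simp only [Subtype.ext_iff, r.injEq] at hxy
      exact Subtype.ext hxy
    · rintro ⟨g, x, hx, rfl⟩
      exact ⟨⟨x, hx⟩, rfl⟩
  rw [this, card_A n d h]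

lemma card_Ksub (n m : ℕ) (a : ZMod n) [NeZero n] (h : m ∣ n) :
    Nat.card (Ksub n m a) = 2 * m := by
  have : Nat.card (Ksub n m a) = Nat.card (A n m ⊕ A n m) := by
    apply Nat.card_congr
    symm
    apply Equiv.ofBijective (Sum.elim
      (fun x => (⟨r x.1, Or.inl ⟨x.1, x.2, rfl⟩⟩ : Ksub n m a))
      (fun x => (⟨sr (a + x.1), Or.inr ⟨x.1, x.2, rfl⟩⟩ : Ksub n m a)))
    constructor
    · rintro (x | x) (y | y) hxy <;>
        simp only [Sum.elim_inl, Sum.elim_inr, Subtype.ext_iff, r.injEq, sr.injEq,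
          reduceCtorEq] at hxy
      · exact congrArg Sum.inl (Subtype.ext hxy)
      · exact congrArg Sum.inr (Subtype.ext (by exact add_left_cancel hxy))
    · rintro ⟨g, (⟨x, hx, rfl⟩ | ⟨x, hx, rfl⟩)⟩
      · exact ⟨Sum.inl ⟨x, hx⟩, rfl⟩
      · exact ⟨Sum.inr ⟨x, hx⟩, rfl⟩
  rw [this, Nat.card_sum, card_A n m h, two_mul]


lemma pow_natCard_mem_eq_one {G : Type*} [Group G] [Finite G] {H : Subgroup G} {g : G}
    (hg : g ∈ H) : g ^ Nat.card H = 1 := by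
  have : ((⟨g, hg⟩ : H) : G) ^ Nat.card H = ((1 : H) : G) := by
    norm_cast
    exact pow_card_eq_one'
  simpa using this

lemma odd_dvd (n : ℕ) (hodd : Odd n) {d : ℕ} (hd : Odd d) (h : d ∣ 2 * n) : d ∣ n := by
  exact (Nat.coprime_two_right.mpr hd).dvd_of_dvd_mul_left h

lemma odd_subgroup_eq (n : ℕ) [NeZero n] (hodd : Odd n) (H : Subgroup (DihedralGroup n))
    (hH : Odd (Nat.card H)) : H = Hsub n (Nat.card H) := by
  set d := Nat.card H with hd
  have hdvd2n : d ∣ 2 * n := by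
    rw [← DihedralGroup.nat_card]
    exact Subgroup.card_subgroup_dvd_card H
  have hdn : d ∣ n := odd_dvd n hodd hH hdvd2n
  have hle : H ≤ Hsub n d := by
    intro g hg
    have hpow : g ^ d = 1 := pow_natCard_mem_eq_one hg
    cases g with
    | r x =>
        rw [r_pow] at hpow
        refine ⟨x, ?_, rfl⟩
        rw [mem_A]
        rw [one_def] at hpow
        exact (r.injEq _ _).mp hpow
    | sr y =>
        exfalso
        have h2 : orderOf (sr y : DihedralGroup n) ∣ d := orderOf_dvd_of_pow_eq_one hpow
        rw [orderOf_sr] at h2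
        rw [Nat.odd_iff] at hH
        omega
  refine Subgroup.eq_of_le_of_card_ge hle ?_
  rw [card_Hsub n d hdn]

lemma rot_pow_n (n : ℕ) (x : ZMod n) : (r x : DihedralGroup n) ^ n = 1 := by
  rw [r_pow, ZMod.natCast_self, zero_mul, one_def]

lemma even_subgroup_eq (n m : ℕ) [NeZero n] (hodd : Odd n) (K : Subgroup (DihedralGroup n))
    (hK : Nat.card K = 2 * m) (hm : m ∣ n) : ∃ a, K = Ksub n m a := by
  -- find an element of order two
  haveI : Fintype K := Fintype.ofFinite K
  have hcard : Fintype.card K = 2 * m := by rw [← Nat.card_eq_fintype_card, hK]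
  have hm0 : 0 < m := by
    have := Nat.card_pos (α := K)
    omega
  obtain ⟨⟨g, hgK⟩, hg2⟩ := exists_prime_orderOf_dvd_card (G := K) 2
    (by rw [hcard]; exact Dvd.intro m rfl)
  rw [Subgroup.orderOf_mk] at hg2
  -- g must be a reflection
  obtain ⟨a, rfl⟩ : ∃ a, g = sr a := by
    cases g with
    | r x =>
        exfalso
        have : orderOf (r x : DihedralGroup n) ∣ n := orderOf_dvd_of_pow_eq_one (rot_pow_n n x)
        rw [hg2] at this
        rw [Nat.odd_iff] at hodd
        omega
    | sr y => exact ⟨y, rfl⟩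
  -- rotations in K are killed by m
  have hrot : ∀ x : ZMod n, r x ∈ K → x ∈ A n m := by
    intro x hx
    have hpow : (r x : DihedralGroup n) ^ (2 * m) = 1 := by
      rw [← hK]; exact pow_natCard_mem_eq_one hx
    rw [r_pow, one_def] at hpow
    have h0 : ((2 * m : ℕ) : ZMod n) * x = 0 := (r.injEq _ _).mp hpow
    have h0' : ((2 * m * x.val : ℕ) : ZMod n) = 0 := by
      push_cast
      push_cast at h0
      rw [mul_assoc, ZMod.natCast_zmod_val]
      linear_combination h0
    rw [ZMod.natCast_eq_zero_iff] at h0'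
    have hn2 : Nat.Coprime n 2 := Nat.coprime_two_right.mpr hodd
    have hnmx : n ∣ m * x.val :=
      hn2.dvd_of_dvd_mul_right (by rw [show m * x.val * 2 = 2 * m * x.val by ring]; exact h0')
    rw [mem_A]
    have : ((m * x.val : ℕ) : ZMod n) = 0 := by
      rw [ZMod.natCast_eq_zero_iff]; exact hnmx
    push_cast at this
    rwa [ZMod.natCast_zmod_val] at this
  refine ⟨a, ?_⟩
  have hle : K ≤ Ksub n m a := by
    intro k hk
    cases k with
    | r x => exact Or.inl ⟨x, hrot x hk, rfl⟩
    | sr y =>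
        have hmem : (sr y : DihedralGroup n) * sr a ∈ K := mul_mem hk hgK
        rw [sr_mul_sr] at hmem
        have hya : (a - y) ∈ A n m := hrot _ hmem
        refine Or.inr ⟨y - a, ?_, by ring_nf⟩
        have := neg_mem hya
        simpa [neg_sub] using this
  refine Subgroup.eq_of_le_of_card_ge hle ?_
  rw [card_Ksub n m a hm, hK]

lemma ksub_mulEquiv (n : ℕ) (hodd : Odd n) (m : ℕ) (a a' : ZMod n) :
    Nonempty (Ksub n m a ≃* Ksub n m a') := by
  have h2 : Nat.Coprime 2 n := Nat.coprime_two_left.mpr hodd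
  set u := ZMod.unitOfCoprime 2 h2 with hu
  set t : ZMod n := ((u⁻¹ : (ZMod n)ˣ) : ZMod n) * (a - a') with ht
  have h2t : (2 : ZMod n) * t = a - a' := by
    have : ((u : (ZMod n)ˣ) : ZMod n) = (2 : ZMod n) := by
      rw [hu, ZMod.coe_unitOfCoprime]
      push_cast
      rfl
    rw [ht, ← mul_assoc, ← this, ← Units.val_mul, mul_inv_cancel, Units.val_one, one_mul]
  -- conjugation by r t
  set e : DihedralGroup n ≃* DihedralGroup n := MulAut.conj (r t) with he
  have hconj_r : ∀ x : ZMod n, e (r x) = r x := by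
    intro x
    simp only [he, MulAut.conj_apply, inv_r, r_mul_r]
    congr 1
    ring
  have hconj_sr : ∀ y : ZMod n, e (sr y) = sr (y - 2 * t) := by
    intro y
    simp only [he, MulAut.conj_apply, inv_r, r_mul_sr, sr_mul_r]
    congr 1
    ring
  have hmap : Subgroup.map e.toMonoidHom (Ksub n m a) = Ksub n m a' := by
    ext g
    simp only [Subgroup.mem_map]
    constructor
    · rintro ⟨k, (⟨x, hx, rfl⟩ | ⟨x, hx, rfl⟩), rfl⟩
      · rw [show e.toMonoidHom (r x) = e (r x) from rfl, hconj_r]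
        exact Or.inl ⟨x, hx, rfl⟩
      · rw [show e.toMonoidHom (sr (a + x)) = e (sr (a + x)) from rfl, hconj_sr]
        refine Or.inr ⟨x, hx, ?_⟩
        rw [h2t]
        congr 1
        ring
    · rintro (⟨x, hx, rfl⟩ | ⟨x, hx, rfl⟩)
      · exact ⟨r x, Or.inl ⟨x, hx, rfl⟩, hconj_r x⟩
      · refine ⟨sr (a + x), Or.inr ⟨x, hx, rfl⟩, ?_⟩
        rw [show e.toMonoidHom (sr (a + x)) = e (sr (a + x)) from rfl, hconj_sr, h2t]
        congr 1
        ring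
  exact ⟨(Subgroup.equivMapOfInjective _ e.toMonoidHom e.injective).trans
    (MulEquiv.subgroupCongr hmap)⟩

lemma card_mul_card (n : ℕ) (p : Subgroup (DihedralGroup n) × Subgroup (DihedralGroup n))
    (hp : IsExactFactorization p) : Nat.card p.1 * Nat.card p.2 = 2 * n := by
  obtain ⟨-, -, hint, hcov⟩ := hp
  have : Nat.card (p.1 × p.2) = Nat.card (DihedralGroup n) := by
    apply Nat.card_congr
    apply Equiv.ofBijective (fun hk => (hk.1 : DihedralGroup n) * hk.2)
    constructor
    · rintro ⟨⟨h1, hh1⟩, ⟨k1, hk1⟩⟩ ⟨⟨h2, hh2⟩, ⟨k2, hk2⟩⟩ heq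
      simp only at heq
      have hz : h2⁻¹ * h1 = k2 * k1⁻¹ := by
        have : h2 * (h2⁻¹ * h1 * k1) = h2 * (k2 * k1⁻¹ * k1) := by
          group
          exact heq
        have := mul_left_cancel this
        have := mul_right_cancel this
        exact this
      have hmem : h2⁻¹ * h1 ∈ p.1 ⊓ p.2 := by
        refine Subgroup.mem_inf.mpr ⟨mul_mem (inv_mem hh2) hh1, ?_⟩
        rw [hz]; exact mul_mem hk2 (inv_mem hk1)
      rw [hint, Subgroup.mem_bot] at hmem
      have h12 : h1 = h2 := by
        have h' := hmem
        rw [inv_mul_eq_one] at h'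
        exact h'.symm
      have hk12 : k1 = k2 := by
        have h' := hz
        rw [hmem, eq_comm, mul_inv_eq_one] at h'
        exact h'.symm
      simp [h12, hk12]
    · intro g
      obtain ⟨h, hh, k, hk, rfl⟩ := hcov g
      exact ⟨⟨⟨h, hh⟩, ⟨k, hk⟩⟩, rfl⟩
  rwa [Nat.card_prod, DihedralGroup.nat_card] at this

lemma bezout_zmod (n d : ℕ) (hd : d ∣ n) (hcop : d.Coprime (n / d)) :
    ∃ α β : ZMod n, (d : ZMod n) * α + ((n / d : ℕ) : ZMod n) * β = 1 := by
  have := Nat.gcd_eq_gcd_ab d (n / d)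
  rw [hcop] at this
  refine ⟨((Nat.gcdA d (n / d) : ℤ) : ZMod n), ((Nat.gcdB d (n / d) : ℤ) : ZMod n), ?_⟩
  have h4 := congrArg (fun z : ℤ => ((z : ZMod n))) this
  simp only [Int.cast_add, Int.cast_mul, Int.cast_one, Int.cast_natCast, Nat.cast_one] at h4
  exact h4.symm

lemma dm_zero (n d : ℕ) (hd : d ∣ n) : (d : ZMod n) * ((n / d : ℕ) : ZMod n) = 0 := by
  rw [← Nat.cast_mul, Nat.mul_div_cancel' hd, ZMod.natCast_self]

lemma cover (n d : ℕ) (hd : d ∣ n) (hcop : d.Coprime (n / d)) (y : ZMod n) :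
    ∃ u v : ZMod n, u ∈ A n d ∧ v ∈ A n (n / d) ∧ y = u + v := by
  obtain ⟨α, β, hab⟩ := bezout_zmod n d hd hcop
  refine ⟨((n / d : ℕ) : ZMod n) * β * y, (d : ZMod n) * α * y, ?_, ?_, ?_⟩
  · rw [mem_A, ← mul_assoc, ← mul_assoc, dm_zero n d hd, zero_mul, zero_mul]
  · rw [mem_A, ← mul_assoc, ← mul_assoc, mul_comm ((n / d : ℕ) : ZMod n), dm_zero n d hd,
      zero_mul, zero_mul]
  · rw [← add_mul, add_comm, hab, one_mul]

lemma fact_of_divisor (n d : ℕ) [NeZero n] (hd : d ∣ n) (hd1 : d ≠ 1)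
    (hcop : d.Coprime (n / d)) :
    IsExactFactorization (Hsub n d, Ksub n (n / d) 0) := by
  obtain ⟨α, β, hab⟩ := bezout_zmod n d hd hcop
  refine ⟨?_, ?_, ?_, ?_⟩
  · intro hbot
    have hcd := card_Hsub n d hd
    rw [show (Hsub n d, Ksub n (n / d) 0).1 = Hsub n d from rfl] at hbot
    rw [hbot, Subgroup.card_bot] at hcd
    exact hd1 hcd.symm
  · intro hbot
    have hmem : (sr 0 : DihedralGroup n) ∈ Ksub n (n / d) 0 := Or.inr ⟨0, zero_mem _, by simp⟩
    rw [show (Hsub n d, Ksub n (n / d) 0).2 = Ksub n (n / d) 0 from rfl] at hbot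
    rw [hbot, Subgroup.mem_bot, one_def] at hmem
    exact (by simp only [ne_eq, reduceCtorEq, not_false_eq_true] : (sr 0 : DihedralGroup n) ≠ r 0) hmem
  · rw [eq_bot_iff]
    rintro g ⟨hg1, hg2⟩
    rw [Subgroup.mem_bot]
    obtain ⟨x, hx, rfl⟩ := hg1
    rw [mem_A] at hx
    have hx2 : ((n / d : ℕ) : ZMod n) * x = 0 := by
      rcases hg2 with ⟨x', hx', hxx⟩ | ⟨x', hx', hxx⟩
      · rw [mem_A] at hx'
        rw [(r.injEq _ _).mp hxx]
        exact hx'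
      · exact absurd hxx (by simp)
    have : x = 0 := by
      calc x = ((d : ZMod n) * α + ((n / d : ℕ) : ZMod n) * β) * x := by rw [hab, one_mul]
      _ = α * ((d : ZMod n) * x) + β * (((n / d : ℕ) : ZMod n) * x) := by ring
      _ = 0 := by rw [hx, hx2, mul_zero, mul_zero, add_zero]
    rw [this, one_def]
  · intro g
    cases g with
    | r y =>
        obtain ⟨u, v, hu, hv, hy⟩ := cover n d hd hcop y
        exact ⟨r u, ⟨u, hu, rfl⟩, r v, Or.inl ⟨v, hv, rfl⟩, by rw [r_mul_r, hy]⟩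
    | sr y =>
        obtain ⟨u, v, hu, hv, hy⟩ := cover n d hd hcop y
        refine ⟨r (-u), ⟨-u, neg_mem hu, rfl⟩, sr (0 + v), Or.inr ⟨v, hv, rfl⟩, ?_⟩
        rw [r_mul_sr]
        congr 1
        rw [hy]
        ring

lemma swap_fact {G : Type*} [Group G] {p : Subgroup G × Subgroup G}
    (hp : IsExactFactorization p) : IsExactFactorization (p.2, p.1) := by
  obtain ⟨h1, h2, h3, h4⟩ := hp
  refine ⟨h2, h1, ?_, ?_⟩
  · show p.2 ⊓ p.1 = ⊥
    rw [inf_comm]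
    exact h3
  · intro g
    obtain ⟨h, hh, k, hk, hg⟩ := h4 g⁻¹
    refine ⟨k⁻¹, inv_mem hk, h⁻¹, inv_mem hh, ?_⟩
    rw [← mul_inv_rev, ← hg, inv_inv]

lemma classify_aux (n : ℕ) [NeZero n] (hodd : Odd n) (H K : Subgroup (DihedralGroup n))
    (hp : IsExactFactorization (H, K)) (hH : Odd (Nat.card H)) :
    ∃ d a, d ∣ n ∧ d ≠ 1 ∧ d.Coprime (n / d) ∧ Odd d ∧
      H = Hsub n d ∧ K = Ksub n (n / d) a := by
  set d := Nat.card H with hd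
  have hcards : d * Nat.card K = 2 * n := card_mul_card n (H, K) hp
  have hdn : d ∣ n := odd_dvd n hodd hH ⟨Nat.card K, hcards.symm⟩
  have hd0 : 0 < d := Nat.card_pos
  obtain ⟨c, hc⟩ := hdn
  have hnd : n / d = c := by rw [hc, Nat.mul_div_cancel_left _ hd0]
  have hKcard : Nat.card K = 2 * (n / d) := by
    rw [hnd]
    have : d * Nat.card K = d * (2 * c) := by rw [hcards, hc]; ring
    exact Nat.eq_of_mul_eq_mul_left hd0 this
  have hHeq : H = Hsub n d := odd_subgroup_eq n hodd H hH
  obtain ⟨a, hKeq⟩ := even_subgroup_eq n (n / d) hodd K hKcard (Nat.div_dvd_of_dvd ⟨c, hc⟩)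
  have hd1 : d ≠ 1 := by
    intro h1
    exact hp.1 (Subgroup.card_eq_one.mp (hd.symm.trans h1))
  have hcop : d.Coprime (n / d) := by
    set g := Nat.gcd d (n / d) with hg
    have hgn : g ∣ n := (Nat.gcd_dvd_left _ _).trans ⟨c, hc⟩
    have hle : Hsub n g ≤ H ⊓ K := by
      intro x hx
      obtain ⟨z, hz, rfl⟩ := hx
      constructor
      · rw [hHeq]
        exact ⟨z, A_mono n (Nat.gcd_dvd_left _ _) hz, rfl⟩
      · rw [hKeq]
        exact Or.inl ⟨z, A_mono n (Nat.gcd_dvd_right _ _) hz, rfl⟩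
    rw [hp.2.2.1] at hle
    have hbot : Hsub n g = ⊥ := le_bot_iff.mp hle
    have := card_Hsub n g hgn
    rw [hbot, Subgroup.card_bot] at this
    exact this.symm
  exact ⟨d, a, ⟨c, hc⟩, hd1, hcop, hH, hHeq, hKeq⟩

lemma parity_lemma (n : ℕ) (hodd : Odd n) {c1 c2 : ℕ} (h : c1 * c2 = 2 * n) :
    (Odd c1 ∧ ¬Odd c2) ∨ (¬Odd c1 ∧ Odd c2) := by
  rcases Nat.even_or_odd c1 with h1 | h1 <;> rcases Nat.even_or_odd c2 with h2 | h2
  · exfalso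
    obtain ⟨x, hx⟩ := h1
    obtain ⟨y, hy⟩ := h2
    rw [Nat.odd_iff] at hodd
    have h4 : (x + x) * (y + y) = 2 * n := by rw [hx, hy] at h; exact h
    obtain ⟨k, hk⟩ : ∃ k, x * y = k := ⟨_, rfl⟩
    have h5 : (x + x) * (y + y) = 4 * k := by rw [← hk]; ring
    have h6 : 2 * n = 4 * k := by rw [← h4, h5]
    omega
  · exact Or.inr ⟨Nat.not_odd_iff_even.mpr h1, h2⟩
  · exact Or.inl ⟨h1, Nat.not_odd_iff_even.mpr h2⟩
  · exfalso
    have h3 : Odd (c1 * c2) := h1.mul h2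
    rw [h, Nat.odd_iff] at h3
    omega

open Classical in
noncomputable def invF (n : ℕ)
    (p : {p : Subgroup (DihedralGroup n) × Subgroup (DihedralGroup n) // IsExactFactorization p}) :
    ℕ :=
  if Odd (Nat.card p.1.1) then Nat.card p.1.1 else Nat.card p.1.2

lemma classify (n : ℕ) [NeZero n] (hodd : Odd n)
    (p : {p : Subgroup (DihedralGroup n) × Subgroup (DihedralGroup n) // IsExactFactorization p}) :
    ∃ d a, d ∣ n ∧ d ≠ 1 ∧ d.Coprime (n / d) ∧ Odd d ∧ invF n p = d ∧
      ((p.1.1 = Hsub n d ∧ p.1.2 = Ksub n (n / d) a) ∨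
        (p.1.1 = Ksub n (n / d) a ∧ p.1.2 = Hsub n d)) := by
  obtain ⟨⟨H, K⟩, hp⟩ := p
  have hcards : Nat.card H * Nat.card K = 2 * n := card_mul_card n (H, K) hp
  rcases parity_lemma n hodd hcards with ⟨h1, h2⟩ | ⟨h1, h2⟩
  · obtain ⟨d, a, hdn, hd1, hcop, hdo, hHeq, hKeq⟩ := classify_aux n hodd H K hp h1
    refine ⟨d, a, hdn, hd1, hcop, hdo, ?_, Or.inl ⟨hHeq, hKeq⟩⟩
    show (if Odd (Nat.card H) then Nat.card H else Nat.card K) = d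
    rw [if_pos h1, hHeq, card_Hsub n d hdn]
  · obtain ⟨d, a, hdn, hd1, hcop, hdo, hKeq, hHeq⟩ :=
      classify_aux n hodd K H (swap_fact hp) h2
    refine ⟨d, a, hdn, hd1, hcop, hdo, ?_, Or.inr ⟨hHeq, hKeq⟩⟩
    show (if Odd (Nat.card H) then Nat.card H else Nat.card K) = d
    rw [if_neg h1, hKeq, card_Hsub n d hdn]

lemma invF_factequiv (n : ℕ) [NeZero n] (hodd : Odd n)
    {p q : {p : Subgroup (DihedralGroup n) × Subgroup (DihedralGroup n) //
      IsExactFactorization p}} (h : FactEquiv p q) : invF n p = invF n q := by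
  have hp := parity_lemma n hodd (card_mul_card n p.1 p.2)
  have hq := parity_lemma n hodd (card_mul_card n q.1 q.2)
  have e1 : invF n p = (if Odd (Nat.card p.1.1) then Nat.card p.1.1 else Nat.card p.1.2) := rfl
  have e2 : invF n q = (if Odd (Nat.card q.1.1) then Nat.card q.1.1 else Nat.card q.1.2) := rfl
  rcases h with ⟨⟨e11⟩, ⟨e22⟩⟩ | ⟨⟨e12⟩, ⟨e21⟩⟩
  · have c1 : Nat.card p.1.1 = Nat.card q.1.1 := Nat.card_congr e11.toEquiv
    have c2 : Nat.card p.1.2 = Nat.card q.1.2 := Nat.card_congr e22.toEquiv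
    rw [e1, e2, c1, c2]
  · have c1 : Nat.card p.1.1 = Nat.card q.1.2 := Nat.card_congr e12.toEquiv
    have c2 : Nat.card p.1.2 = Nat.card q.1.1 := Nat.card_congr e21.toEquiv
    rw [e1, e2, c1, c2]
    rcases hp with ⟨h1, h2⟩ | ⟨h1, h2⟩
    · rw [c1] at h1
      rw [c2] at h2
      rw [if_pos h1, if_neg h2]
    · rw [c1] at h1
      rw [c2] at h2
      rw [if_neg h1, if_pos h2]

end DF

open DF in
theorem f₂_dihedral_odd' (n : ℕ) (hn : 0 < n) (hodd : Odd n) :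
    f₂ (DihedralGroup n) =
      ((n.divisors.filter fun d => d ≠ 1 ∧ d.Coprime (n / d))).card := by
  haveI : NeZero n := ⟨hn.ne'⟩
  set S := n.divisors.filter (fun d => d ≠ 1 ∧ d.Coprime (n / d)) with hS
  have hmem : ∀ p, invF n p ∈ S := by
    intro p
    obtain ⟨d, a, hdn, hd1, hcop, hdo, hinv, -⟩ := classify n hodd p
    rw [hinv, hS, Finset.mem_filter, Nat.mem_divisors]
    exact ⟨⟨hdn, hn.ne'⟩, hd1, hcop⟩
  set Φ : Quot (FactEquiv (G := DihedralGroup n)) → {d // d ∈ S} :=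
    Quot.lift (fun p => (⟨invF n p, hmem p⟩ : {d // d ∈ S}))
      (fun p q h => Subtype.ext (invF_factequiv n hodd h)) with hΦ
  have hbij : Function.Bijective Φ := by
    constructor
    · intro x y hxy
      obtain ⟨p, rfl⟩ := Quot.exists_rep x
      obtain ⟨q, rfl⟩ := Quot.exists_rep y
      rw [hΦ] at hxy
      have hinv : invF n p = invF n q := congrArg Subtype.val hxy
      apply Quot.sound
      obtain ⟨d, a, hdn, hd1, hcop, hdo, hpd, hpshape⟩ := classify n hodd p
      obtain ⟨d', a', hdn', hd1', hcop', hdo', hqd, hqshape⟩ := classify n hodd q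
      have hdd : d = d' := by rw [← hpd, ← hqd, hinv]
      subst hdd
      rcases hpshape with ⟨hp1, hp2⟩ | ⟨hp1, hp2⟩ <;>
        rcases hqshape with ⟨hq1, hq2⟩ | ⟨hq1, hq2⟩
      · exact Or.inl ⟨by rw [hp1, hq1]; exact ⟨MulEquiv.refl _⟩,
          by rw [hp2, hq2]; exact ksub_mulEquiv n hodd _ a a'⟩
      · exact Or.inr ⟨by rw [hp1, hq2]; exact ⟨MulEquiv.refl _⟩,
          by rw [hp2, hq1]; exact ksub_mulEquiv n hodd _ a a'⟩
      · exact Or.inr ⟨by rw [hp1, hq2]; exact ksub_mulEquiv n hodd _ a a',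
          by rw [hp2, hq1]; exact ⟨MulEquiv.refl _⟩⟩
      · exact Or.inl ⟨by rw [hp1, hq1]; exact ksub_mulEquiv n hodd _ a a',
          by rw [hp2, hq2]; exact ⟨MulEquiv.refl _⟩⟩
    · rintro ⟨d, hd⟩
      have hd' := hd
      rw [hS, Finset.mem_filter, Nat.mem_divisors] at hd'
      obtain ⟨⟨hdn, -⟩, hd1, hcop⟩ := hd'
      have hdo : Odd d := by
        rw [Nat.odd_iff] at hodd ⊢
        rcases Nat.even_or_odd d with he | ho
        · exfalso
          have h2n : 2 ∣ n := dvd_trans he.two_dvd hdn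
          omega
        · rw [Nat.odd_iff] at ho
          exact ho
      have hfact := fact_of_divisor n d hdn hd1 hcop
      refine ⟨Quot.mk _ ⟨(Hsub n d, Ksub n (n / d) 0), hfact⟩, ?_⟩
      apply Subtype.ext
      rw [hΦ]
      show invF n _ = d
      simp only [invF]
      rw [card_Hsub n d hdn, if_pos hdo]
  rw [f₂, Nat.card_congr (Equiv.ofBijective Φ hbij), Nat.card_eq_finsetCard]


/-- For odd `n`, the number of inequivalent exact factorizations of the dihedral group
`D_{2n}` equals `2 ^ ω(n) - 1`. -/
theorem f₂_dihedral_odd (n : ℕ) (hn : 0 < n) (hodd : Odd n) :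
    f₂ (DihedralGroup n) = 2 ^ n.primeFactors.card - 1 := by
  rw [f₂_dihedral_odd' n hn hodd, count_lemma n hn]
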